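/- Let F, G ∈ ℚ(t) be rational functions such that F, G, and the constant function 1 are linearly independent over ℚ. Then the rational function H(t) = ((F'(t) - G'(t)) · (G'(t)/F'(t))) / (G'(t)/F'(t))' is not a constant. In particular, neither F' - G' nor G'/F' is identically zero, and (G'/F')' is not identically zero. -/

import Mathlib

open Polynomial


/-- The derivative of a rational function over ℚ, via the quotient rule on
numerator and denominator. -/
noncomputable def rd (F : RatFunc ℚ) : RatFunc ℚ :=
  (algebraMap (Polynomial ℚ) (RatFunc ℚ) (Polynomial.derivative F.num) *
      algebraMap (Polynomial ℚ) (RatFunc ℚ) F.denom -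
    algebraMap (Polynomial ℚ) (RatFunc ℚ) F.num *
      algebraMap (Polynomial ℚ) (RatFunc ℚ) (Polynomial.derivative F.denom)) /
  algebraMap (Polynomial ℚ) (RatFunc ℚ) F.denom ^ 2

namespace KeyAux

noncomputable abbrev A : Polynomial ℚ →+* RatFunc ℚ := algebraMap (Polynomial ℚ) (RatFunc ℚ)

theorem Ainj : Function.Injective A := RatFunc.algebraMap_injective ℚ

theorem A_ne_zero {p : ℚ[X]} (hp : p ≠ 0) : A p ≠ 0 := fun h => hp (Ainj (by simpa using h))

theorem rd_def' (F : RatFunc ℚ) :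
    rd F = A (derivative F.num * F.denom - F.num * derivative F.denom) / A (F.denom ^ 2) := by
  simp [rd, map_sub, map_mul, map_pow]

theorem rd_rep (F : RatFunc ℚ) (p q : ℚ[X]) (hq : q ≠ 0) (hF : A p / A q = F) :
    rd F = A (derivative p * q - p * derivative q) / A (q ^ 2) := by
  have hD : (F.denom : ℚ[X]) ≠ 0 := RatFunc.denom_ne_zero F
  have hAq : A q ≠ 0 := A_ne_zero hq
  have hAD : A F.denom ≠ 0 := A_ne_zero hD
  have cross : p * F.denom = F.num * q := by
    apply Ainj
    have h2 : A p / A q = A F.num / A F.denom := by rw [hF, RatFunc.num_div_denom]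
    rw [div_eq_div_iff hAq hAD] at h2
    simpa [map_mul] using h2
  have dcross : derivative p * F.denom + p * derivative F.denom
      = derivative F.num * q + F.num * derivative q := by
    have := congrArg derivative cross
    simpa [derivative_mul] using this
  rw [rd_def', div_eq_div_iff (A_ne_zero (pow_ne_zero 2 hD)) (A_ne_zero (pow_ne_zero 2 hq))]
  rw [← map_mul, ← map_mul]
  apply congrArg A
  linear_combination (derivative F.denom * q + F.denom * derivative q) * cross -
    F.denom * q * dcross

theorem rd_C (c : ℚ) : rd (RatFunc.C c) = 0 := by
  rw [rd, RatFunc.num_C, RatFunc.denom_C]; simp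

theorem rd_sub (F G : RatFunc ℚ) : rd (F - G) = rd F - rd G := by
  have hDF : (F.denom : ℚ[X]) ≠ 0 := RatFunc.denom_ne_zero F
  have hDG : (G.denom : ℚ[X]) ≠ 0 := RatFunc.denom_ne_zero G
  have hrep : A (F.num * G.denom - G.num * F.denom) / A (F.denom * G.denom) = F - G := by
    rw [map_sub, map_mul, map_mul, map_mul, div_eq_iff
      (mul_ne_zero (A_ne_zero hDF) (A_ne_zero hDG))]
    have hF : A F.num = F * A F.denom :=
      (div_eq_iff (A_ne_zero hDF)).mp (RatFunc.num_div_denom F)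
    have hG : A G.num = G * A G.denom :=
      (div_eq_iff (A_ne_zero hDG)).mp (RatFunc.num_div_denom G)
    rw [hF, hG]; ring
  rw [rd_rep (F - G) _ _ (mul_ne_zero hDF hDG) hrep, rd_def', rd_def']
  simp only [derivative_sub, derivative_mul, map_sub, map_mul, map_add, map_pow]
  field_simp [A_ne_zero hDF, A_ne_zero hDG]
  ring

theorem rd_C_mul (c : ℚ) (F : RatFunc ℚ) : rd (RatFunc.C c * F) = RatFunc.C c * rd F := by
  have hDF : (F.denom : ℚ[X]) ≠ 0 := RatFunc.denom_ne_zero F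
  have hrep : A (Polynomial.C c * F.num) / A F.denom = RatFunc.C c * F := by
    rw [map_mul, RatFunc.algebraMap_C, mul_div_assoc, RatFunc.num_div_denom]
  rw [rd_rep (RatFunc.C c * F) _ _ hDF hrep, rd_def']
  simp only [derivative_C_mul, map_sub, map_mul, map_pow, RatFunc.algebraMap_C]
  field_simp

theorem const_of_wronskian (u : RatFunc ℚ)
    (h : derivative u.num * u.denom - u.num * derivative u.denom = 0) :
    ∃ k : ℚ, u = RatFunc.C k := by
  have hq : (u.denom : ℚ[X]) ≠ 0 := RatFunc.denom_ne_zero u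
  have hcop : IsCoprime u.num u.denom := RatFunc.isCoprime_num_denom u
  have h' : u.num * derivative u.denom = derivative u.num * u.denom :=
    (sub_eq_zero.mp h).symm
  -- u.denom divides its own derivative, hence derivative of denom is 0
  have hqd : u.denom ∣ derivative u.denom := by
    have h1 : u.denom ∣ u.num * derivative u.denom := ⟨derivative u.num, by linear_combination h'⟩
    exact (hcop.symm.dvd_of_dvd_mul_left h1)
  have hq' : derivative u.denom = 0 := by
    by_contra hne
    have h1 : u.denom.natDegree ≤ (derivative u.denom).natDegree :=
      natDegree_le_of_dvd hqd hne
    have h2 : u.denom.natDegree ≠ 0 := by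
      intro h0
      exact hne (by rw [eq_C_of_natDegree_eq_zero h0, derivative_C])
    exact absurd h1 (not_le.mpr (natDegree_derivative_lt h2))
  have hq1 : u.denom = 1 :=
    eq_one_of_monic_natDegree_zero (RatFunc.monic_denom u)
      (natDegree_eq_zero_of_derivative_eq_zero hq')
  have hp' : derivative u.num = 0 := by
    have := h; rw [hq', hq1] at this; simpa using this
  refine ⟨u.num.coeff 0, ?_⟩
  conv_lhs => rw [← RatFunc.num_div_denom u, hq1, eq_C_of_derivative_eq_zero hp']
  rw [map_one, div_one, RatFunc.algebraMap_C]

theorem const_of_rd_eq_zero {u : RatFunc ℚ} (h : rd u = 0) : ∃ k : ℚ, u = RatFunc.C k := by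
  apply const_of_wronskian
  rw [rd_def', _root_.div_eq_zero_iff] at h
  rcases h with h | h
  · exact Ainj (by simpa using h)
  · exact absurd h (A_ne_zero (pow_ne_zero 2 (RatFunc.denom_ne_zero u)))

theorem pow_dvd_derivative {π h : ℚ[X]} {k : ℕ} (hd : π ^ k ∣ h) :
    π ^ (k - 1) ∣ derivative h := by
  obtain ⟨t, rfl⟩ := hd
  cases k with
  | zero => simp
  | succ j =>
    rw [derivative_mul, derivative_pow]
    simp only [Nat.add_sub_cancel]
    refine dvd_add ⟨Polynomial.C ((j + 1 : ℕ) : ℚ) * derivative π * t, by push_cast; ring⟩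
      ⟨π * derivative t, by ring⟩

theorem irr_not_dvd_derivative {π : ℚ[X]} (hπ : Irreducible π) : ¬ π ∣ derivative π := by
  intro hd
  have hπ0 : π.natDegree ≠ 0 := by
    intro h0
    rcases eq_or_ne (π.coeff 0) 0 with h | h
    · exact hπ.ne_zero (by rw [eq_C_of_natDegree_eq_zero h0, h, map_zero])
    · exact hπ.not_isUnit (by rw [eq_C_of_natDegree_eq_zero h0]; exact isUnit_C.mpr (isUnit_iff_ne_zero.mpr h))
  have hd0 : derivative π ≠ 0 := by
    intro h0
    exact hπ0 (natDegree_eq_zero_of_derivative_eq_zero h0)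
  exact absurd (natDegree_le_of_dvd hd hd0) (not_le.mpr (natDegree_derivative_lt hπ0))

theorem no_log_deriv (u R : RatFunc ℚ) (hu : u ≠ 0)
    (hunc : ∀ k : ℚ, u ≠ RatFunc.C k) (hRnc : ∀ k : ℚ, R ≠ RatFunc.C k) :
    rd u ≠ rd R * u := by
  intro heq
  have hp : u.num ≠ 0 := RatFunc.num_ne_zero hu
  have hq : (u.denom : ℚ[X]) ≠ 0 := RatFunc.denom_ne_zero u
  have hb : (R.denom : ℚ[X]) ≠ 0 := RatFunc.denom_ne_zero R
  -- the polynomial equation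
  have heq2 : A (derivative u.num * u.denom - u.num * derivative u.denom) / A (u.denom ^ 2)
      = A (derivative R.num * R.denom - R.num * derivative R.denom) / A (R.denom ^ 2)
        * (A u.num / A u.denom) := by
    rw [← rd_def', ← rd_def', RatFunc.num_div_denom]; exact heq
  set p := u.num with hpdef
  set q := u.denom with hqdef
  set a := R.num with hadef
  set b := R.denom with hbdef
  have E : (derivative p * q - p * derivative q) * b ^ 2
      = (derivative a * b - a * derivative b) * p * q := by
    apply mul_right_cancel₀ hq
    apply Ainj
    rw [div_mul_div_comm, div_eq_div_iff (A_ne_zero (pow_ne_zero 2 hq))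
      (mul_ne_zero (A_ne_zero (pow_ne_zero 2 hb)) (A_ne_zero hq))] at heq2
    simp only [map_mul, map_sub, map_pow] at heq2 ⊢
    linear_combination heq2
  have hLp : derivative p * q - p * derivative q ≠ 0 := by
    intro h0
    obtain ⟨k, hk⟩ := const_of_wronskian u h0
    exact hunc k hk
  rcases Nat.eq_zero_or_pos b.natDegree with hb0 | hb1
  · -- case: denominator of R is constant, use degrees
    have hb1' : b = 1 := eq_one_of_monic_natDegree_zero (RatFunc.monic_denom R) hb0
    have hanc : a.natDegree ≠ 0 := by
      intro h0
      refine hRnc (a.coeff 0) ?_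
      conv_lhs => rw [← RatFunc.num_div_denom R, ← hadef, ← hbdef, hb1',
        eq_C_of_natDegree_eq_zero h0]
      rw [map_one, div_one, RatFunc.algebraMap_C]
    have ha' : derivative a ≠ 0 := fun h0 => hanc (natDegree_eq_zero_of_derivative_eq_zero h0)
    have E2 : derivative p * q - p * derivative q = derivative a * p * q := by
      rw [hb1'] at E; simpa using E
    have hpq1 : 1 ≤ p.natDegree + q.natDegree := by
      by_contra hcon
      push_neg at hcon
      have hp0 : p.natDegree = 0 := by omega
      have hq0 : q.natDegree = 0 := by omega
      have hq1 : q = 1 := eq_one_of_monic_natDegree_zero (RatFunc.monic_denom u) hq0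
      refine hunc (p.coeff 0) ?_
      conv_lhs => rw [← RatFunc.num_div_denom u, ← hpdef, ← hqdef, hq1,
        eq_C_of_natDegree_eq_zero hp0]
      rw [map_one, div_one, RatFunc.algebraMap_C]
    -- degree bound on the left side
    have hdeg : (derivative p * q - p * derivative q).natDegree ≤ p.natDegree + q.natDegree - 1 := by
      refine (natDegree_sub_le _ _).trans ?_
      refine max_le ?_ ?_
      · rcases Nat.eq_zero_or_pos p.natDegree with h0 | h1
        · have : derivative p = 0 := by
            rw [eq_C_of_natDegree_eq_zero h0, derivative_C]
          simp only [this, zero_mul, natDegree_zero]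
          omega
        · refine (natDegree_mul_le).trans ?_
          have := natDegree_derivative_le p
          omega
      · rcases Nat.eq_zero_or_pos q.natDegree with h0 | h1
        · have : derivative q = 0 := by
            rw [eq_C_of_natDegree_eq_zero h0, derivative_C]
          simp only [this, mul_zero, natDegree_zero]
          omega
        · refine (natDegree_mul_le).trans ?_
          have := natDegree_derivative_le q
          omega
    have hdeg2 : (derivative a * p * q).natDegree
        = (derivative a).natDegree + p.natDegree + q.natDegree := by
      rw [natDegree_mul (mul_ne_zero ha' hp) hq, natDegree_mul ha' hp]
    rw [E2, hdeg2] at hdeg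
    omega
  · -- case: denominator of R has an irreducible factor
    have hbnu : ¬ IsUnit b := by
      intro hub
      have := isUnit_iff_degree_eq_zero.mp hub
      rw [degree_eq_natDegree hb] at this
      exact absurd (by exact_mod_cast this) (by omega)
    obtain ⟨π, hπ, hπb⟩ := WfDvdMonoid.exists_irreducible_factor hbnu hb
    have hprime : Prime π := UniqueFactorizationMonoid.irreducible_iff_prime.mp hπ
    have hπ0 : π ≠ 0 := hπ.ne_zero
    obtain ⟨m, s, hπs, hbms⟩ := WfDvdMonoid.max_power_factor hb hπ
    obtain ⟨e, sp, hπsp, hpe⟩ := WfDvdMonoid.max_power_factor hp hπ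
    obtain ⟨f, sq, hπsq, hqf⟩ := WfDvdMonoid.max_power_factor hq hπ
    have hm : 1 ≤ m := by
      by_contra hcon
      push_neg at hcon
      interval_cases m
      rw [hbms, pow_zero, one_mul] at hπb
      exact hπs hπb
    obtain ⟨m', rfl⟩ : ∃ m', m = m' + 1 := ⟨m - 1, by omega⟩
    have hπa : ¬ π ∣ a := fun hd =>
      hπ.not_isUnit ((RatFunc.isCoprime_num_denom R).isUnit_of_dvd' hd hπb)
    have hππ' : ¬ π ∣ derivative π := irr_not_dvd_derivative hπ
    -- decomposition of the numerator of rd R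
    set T : ℚ[X] := derivative a * π * s - Polynomial.C ((m' + 1 : ℕ) : ℚ) * a * derivative π * s
      - a * π * derivative s with hTdef
    have hT : derivative a * b - a * derivative b = π ^ m' * T := by
      rw [hbms, derivative_mul, derivative_pow, hTdef]
      push_cast
      ring
    have hπT : ¬ π ∣ T := by
      intro hd
      have hd2 : π ∣ Polynomial.C ((m' + 1 : ℕ) : ℚ) * a * derivative π * s := by
        have : Polynomial.C ((m' + 1 : ℕ) : ℚ) * a * derivative π * s
            = π * (derivative a * s - a * derivative s) - T := by
          rw [hTdef]; ring
        rw [this]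
        exact dvd_sub (Dvd.intro _ rfl) hd
      rcases hprime.dvd_mul.mp hd2 with hd3 | hd3
      · rcases hprime.dvd_mul.mp hd3 with hd4 | hd4
        · rcases hprime.dvd_mul.mp hd4 with hd5 | hd5
          · exact hπ.not_isUnit (isUnit_of_dvd_unit hd5
              (isUnit_C.mpr (isUnit_iff_ne_zero.mpr (by positivity))))
          · exact hπa hd5
        · exact hππ' hd4
      · exact hπs hd3
    -- divisibility of the left side of E
    have hL : π ^ (m' + 1 + e + f) ∣ (derivative p * q - p * derivative q) * b ^ 2 := by
      have h1 : π ^ (e + f - 1) ∣ derivative p * q - p * derivative q := by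
        refine dvd_sub ?_ ?_
        · have := mul_dvd_mul (pow_dvd_derivative (Dvd.intro _ hpe.symm))
            (Dvd.intro _ hqf.symm : π ^ f ∣ q)
          exact dvd_trans (pow_dvd_pow π (by omega : e + f - 1 ≤ e - 1 + f))
            (by rwa [← pow_add] at this)
        · have := mul_dvd_mul (Dvd.intro _ hpe.symm : π ^ e ∣ p)
            (pow_dvd_derivative (Dvd.intro _ hqf.symm))
          exact dvd_trans (pow_dvd_pow π (by omega : e + f - 1 ≤ e + (f - 1)))
            (by rwa [← pow_add] at this)
      have h2 : π ^ (2 * (m' + 1)) ∣ b ^ 2 := by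
        rw [hbms, mul_pow]
        exact ⟨s ^ 2, by ring⟩
      have := mul_dvd_mul h1 h2
      rw [← pow_add] at this
      exact dvd_trans (pow_dvd_pow π (by omega)) this
    -- exact decomposition of the right side
    have hR : (derivative a * b - a * derivative b) * p * q
        = π ^ (m' + e + f) * (T * sp * sq) := by
      rw [hT, hpe, hqf, pow_add, pow_add]
      ring
    rw [E, hR] at hL
    have hL2 : π ^ (m' + e + f) * π ∣ π ^ (m' + e + f) * (T * sp * sq) := by
      have : π ^ (m' + e + f) * π = π ^ (m' + 1 + e + f) := by
        rw [← pow_succ]; ring_nf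
      rwa [this]
    have hdvd : π ∣ T * sp * sq :=
      (mul_dvd_mul_iff_left (pow_ne_zero _ hπ0)).mp hL2
    rcases hprime.dvd_mul.mp hdvd with hd | hd
    · rcases hprime.dvd_mul.mp hd with hd2 | hd2
      · exact hπT hd2
      · exact hπsp hd2
    · exact hπsq hd

end KeyAux

open KeyAux in
theorem key_nondegeneracy (F G : RatFunc ℚ)
    (h : LinearIndependent ℚ ![1, F, G]) :
    (¬∃ c : ℚ, ((rd F - rd G) * (rd G / rd F)) / rd (rd G / rd F) = RatFunc.C c) ∧
      rd F - rd G ≠ 0 ∧ rd G / rd F ≠ 0 ∧ rd (rd G / rd F) ≠ 0 := by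
  have hli := Fintype.linearIndependent_iff.mp h
  have hcomb : ∀ c d e : ℚ, RatFunc.C c * 1 + RatFunc.C d * F + RatFunc.C e * G = 0 →
      c = 0 ∧ d = 0 ∧ e = 0 := by
    intro c d e hrel
    have h0 := hli ![c, d, e] (by
      rw [Fin.sum_univ_three]
      simpa [RatFunc.smul_eq_C_mul, Rat.smul_def] using hrel)
    exact ⟨h0 0, h0 1, h0 2⟩
  have hF : ∀ c : ℚ, F ≠ RatFunc.C c := by
    intro c hc
    have := hcomb c (-1) 0 (by simp only [map_neg, map_one, map_zero, ← hc]; ring)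
    simp at this
  have hG : ∀ c : ℚ, G ≠ RatFunc.C c := by
    intro c hc
    have := hcomb c 0 (-1) (by simp only [map_neg, map_one, map_zero, ← hc]; ring)
    simp at this
  have hFG : ∀ c : ℚ, F - G ≠ RatFunc.C c := by
    intro c hc
    have := hcomb c (-1) 1 (by simp only [map_neg, map_one, map_zero, ← hc]; ring)
    simp at this
  have hGF : ∀ c d : ℚ, G - RatFunc.C c * F ≠ RatFunc.C d := by
    intro c d hc
    have := hcomb d c (-1) (by simp only [map_neg, map_one, map_zero, ← hc]; ring)
    simp at this
  have hrdF : rd F ≠ 0 := by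
    intro h0; obtain ⟨c, hc⟩ := const_of_rd_eq_zero h0; exact hF c hc
  have hrdG : rd G ≠ 0 := by
    intro h0; obtain ⟨c, hc⟩ := const_of_rd_eq_zero h0; exact hG c hc
  have b2 : rd F - rd G ≠ 0 := by
    intro h0
    rw [← rd_sub] at h0
    obtain ⟨c, hc⟩ := const_of_rd_eq_zero h0
    exact hFG c hc
  have b3 : rd G / rd F ≠ 0 := div_ne_zero hrdG hrdF
  have b4 : rd (rd G / rd F) ≠ 0 := by
    intro h0
    obtain ⟨c, hc⟩ := const_of_rd_eq_zero h0
    have hceq : rd G = RatFunc.C c * rd F := by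
      rw [← hc]; field_simp
    have hz : rd (G - RatFunc.C c * F) = 0 := by
      rw [rd_sub, rd_C_mul, hceq]; ring
    obtain ⟨d, hd⟩ := const_of_rd_eq_zero hz
    exact hGF c d hd
  refine ⟨?_, b2, b3, b4⟩
  rintro ⟨c, hc⟩
  rw [div_eq_iff b4] at hc
  have hcne : c ≠ 0 := by
    intro h0
    rw [h0, map_zero, zero_mul] at hc
    exact (mul_ne_zero b2 b3) hc
  have hRd : rd (rd G / rd F) = rd (RatFunc.C c⁻¹ * (F - G)) * (rd G / rd F) := by
    rw [rd_C_mul, rd_sub, mul_assoc, hc, ← mul_assoc, ← map_mul, inv_mul_cancel₀ hcne,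
      map_one, one_mul]
  have hunc : ∀ k : ℚ, rd G / rd F ≠ RatFunc.C k := by
    intro k hk
    exact b4 (by rw [hk, rd_C])
  have hRnc : ∀ k : ℚ, RatFunc.C c⁻¹ * (F - G) ≠ RatFunc.C k := by
    intro k hk
    have h2 : F - G = RatFunc.C (c * k) := by
      have h3 := congrArg (fun x => RatFunc.C c * x) hk
      simp only [← mul_assoc, ← map_mul, mul_inv_cancel₀ hcne, map_one, one_mul] at h3
      exact h3
    exact hFG _ h2
  exact no_log_deriv (rd G / rd F) (RatFunc.C c⁻¹ * (F - G)) b3 hunc hRnc hRd
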